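/- Let m ≥ 1, let A_i be a real r_i × c_i matrix for i = 1,…,m, and let σ be a permutation of {1,…,m}. Then, after the canonical identification of the product index sets, K^σ_{(r_1,…,r_m)} · (A_1 ⊗ A_2 ⊗ … ⊗ A_m) · K^{σ⁻¹}_{(c_{σ⁻¹(1)},…,c_{σ⁻¹(m)})} = A_{σ⁻¹(1)} ⊗ A_{σ⁻¹(2)} ⊗ … ⊗ A_{σ⁻¹(m)}. -/

import Mathlib

open Kronecker Matrix

noncomputable section

/-- Elementary matrix with a single `1` at position `(i, j)`. -/
def elemM {α β : Type*} [DecidableEq α] [DecidableEq β] (i : α) (j : β) :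
    Matrix α β ℝ :=
  Matrix.of fun a b => if a = i ∧ b = j then 1 else 0

/-- The shuffle matrix `K^σ_ι = ∑_i E^{i_{σ⁻¹(1)}, i_1} ⊗ ⋯ ⊗ E^{i_{σ⁻¹(m)}, i_m}`,
with the `t`-th Kronecker factor of size `ι (σ⁻¹ t) × ι t`. -/
def shuffle {m : ℕ} (σ : Equiv.Perm (Fin m)) (ι : Fin m → Type*)
    [∀ t, Fintype (ι t)] [∀ t, DecidableEq (ι t)] :
    Matrix (∀ t, ι (σ⁻¹ t)) (∀ t, ι t) ℝ :=
  ∑ i : ∀ t, ι t, Matrix.of fun a b => ∏ t, elemM (i (σ⁻¹ t)) (i t) (a t) (b t)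

/-- Kronecker product of a finite family of matrices, rows and columns indexed
by tuples via the canonical identification of the iterated product index sets. -/
def kron' {m : ℕ} {ι κ : Fin m → Type*} (M : ∀ t, Matrix (ι t) (κ t) ℝ) :
    Matrix (∀ t, ι t) (∀ t, κ t) ℝ :=
  Matrix.of fun a b => ∏ t, M t (a t) (b t)

lemma shuffle_apply {m : ℕ} (σ : Equiv.Perm (Fin m)) (ι : Fin m → Type*)
    [∀ t, Fintype (ι t)] [∀ t, DecidableEq (ι t)]
    (a : ∀ t, ι (σ⁻¹ t)) (b : ∀ t, ι t) :
    shuffle σ ι a b = if ∀ t, a t = b (σ⁻¹ t) then 1 else 0 := by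
  unfold shuffle elemM
  simp only [Matrix.sum_apply, Matrix.of_apply, Finset.prod_boole]
  rw [Finset.sum_eq_single b]
  · simp only [and_true]
    congr 1
    · simp only [eq_iff_iff]
      constructor
      · intro h t; exact h t (Finset.mem_univ t)
      · intro h t _; exact h t
  · intro i _ hib
    rw [if_neg]
    intro h
    exact hib (funext fun t => (h t (Finset.mem_univ t)).2.symm)
  · intro h; exact absurd (Finset.mem_univ b) h

lemma cast_app {m : ℕ} {r : Fin m → ℕ} (x : ∀ t, Fin (r t)) {u v : Fin m}
    (h : u = v) : Fin.cast (congrArg r h) (x u) = x v := by subst h; rfl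

lemma app_cast {m : ℕ} {r c : Fin m → ℕ}
    (A : ∀ t : Fin m, Matrix (Fin (r t)) (Fin (c t)) ℝ) {u v : Fin m}
    (h : u = v) (i : Fin (r u)) (j : Fin (c u)) :
    A v (Fin.cast (congrArg r h) i) (Fin.cast (congrArg c h) j) = A u i j := by
  subst h; rfl

/-- Theorem 3.12 of d'Angeli–Donno: shuffling a Kronecker product of `m`
matrices by a permutation `σ`:
`K^σ_r (A_1 ⊗ ⋯ ⊗ A_m) K^{σ⁻¹}_{c_{σ⁻¹}} = A_{σ⁻¹(1)} ⊗ ⋯ ⊗ A_{σ⁻¹(m)}`. -/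
theorem shuffle_kronecker {m : ℕ} (hm : 1 ≤ m) (r c : Fin m → ℕ)
    (A : ∀ t : Fin m, Matrix (Fin (r t)) (Fin (c t)) ℝ) (σ : Equiv.Perm (Fin m)) :
    shuffle σ (fun t => Fin (r t)) * kron' A *
        (shuffle σ⁻¹ fun t => Fin (c (σ⁻¹ t))).submatrix
          (fun (b : ∀ t, Fin (c t)) t => Fin.cast (by simp) (b t)) id =
      kron' fun t => A (σ⁻¹ t) := by
  ext a d
  simp only [Matrix.mul_apply, Matrix.submatrix_apply, id_eq, shuffle_apply, inv_inv]
  have hx : ∀ x : ∀ t, Fin (r t), (∀ t, a t = x (σ⁻¹ t)) ↔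
      x = fun s => Fin.cast (congrArg r (σ.symm_apply_apply s)) (a (σ s)) := by
    intro x
    constructor
    · intro h
      funext s
      rw [h (σ s)]
      exact (cast_app x (σ.symm_apply_apply s : σ⁻¹ (σ s) = s)).symm
    · intro h
      subst h
      intro t
      exact (cast_app a (σ.apply_symm_apply t : σ (σ⁻¹ t) = t)).symm
  have hb : ∀ b : ∀ t, Fin (c t),
      (∀ t, Fin.cast (by simp : c t = c (σ⁻¹ (σ⁻¹⁻¹ t))) (b t) = d (σ⁻¹⁻¹ t)) ↔
      b = fun s => Fin.cast (congrArg c (σ.symm_apply_apply s : σ⁻¹ (σ s) = s)) (d (σ s)) := by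
    intro b
    constructor
    · intro h
      funext s
      apply Fin.ext
      have h' := congrArg Fin.val (h s)
      simp only [Fin.coe_cast, inv_inv] at h'
      exact h'
    · intro h
      subst h
      intro t
      apply Fin.ext
      simp only [Fin.coe_cast]
      exact congrArg (fun z => (d z).val) (by simp)
  simp only [hx, hb, ite_mul, one_mul, zero_mul, mul_ite, mul_one, mul_zero,
    Finset.sum_ite_eq', Finset.mem_univ, if_true]
  show kron' A _ _ = _
  unfold kron'
  simp only [Matrix.of_apply]
  rw [← Equiv.prod_comp σ (fun t => A (σ⁻¹ t) (a t) (d t))]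
  exact Finset.prod_congr rfl fun t _ =>
    app_cast A (σ.symm_apply_apply t : σ⁻¹ (σ t) = t) (a (σ t)) (d (σ t))

end
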